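/- Let F_β denote the class of distributions F on ℝ satisfying, for some fixed constants 0 < c_1 < c_2 and β > 0, that 1 − F(F^{-1}(1) − t) ∈ [c_1 t^β, c_2 t^β] for all sufficiently small t ≥ 0. For every ε ∈ (0,1/2) there exist absolute constants and pairs F_1, F_2 ∈ F_β with |max(F_1) − max(F_2)| ≥ 2ε such that: (i) W_2(F_1,F_2) = O(ε^{β/2+1}); also there exist such pairs with (ii) W_∞(F_1,F_2) = O(ε); and such pairs with (iii) D_KL(F_1 ‖ F_2) = O(ε^β). -/

import Mathlib

open MeasureTheory ProbabilityTheory Set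
open scoped NNReal ENNReal

open Classical in
/-- The Kullback–Leibler divergence `D_KL(μ ‖ ν)`, valued in `ℝ≥0∞`. -/
noncomputable def klDiv {α : Type*} [MeasurableSpace α] (μ ν : Measure α) : ℝ≥0∞ :=
  if μ ≪ ν ∧ Integrable (llr μ ν) μ then ENNReal.ofReal (∫ x, llr μ ν x ∂μ) else ⊤

/-- `γ` is a coupling of `μ` and `ν`. -/
def IsCoupling (γ : Measure (ℝ × ℝ)) (μ ν : Measure ℝ) : Prop :=
  γ.map Prod.fst = μ ∧ γ.map Prod.snd = ν

/-- The squared Wasserstein-2 distance, valued in `ℝ≥0∞`. -/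
noncomputable def wasserstein2Sq (μ ν : Measure ℝ) : ℝ≥0∞ :=
  ⨅ (γ : Measure (ℝ × ℝ)) (_ : IsCoupling γ μ ν),
    ∫⁻ p, ENNReal.ofReal ((p.1 - p.2) ^ 2) ∂γ

/-- The Wasserstein-∞ distance, valued in `ℝ≥0∞`. -/
noncomputable def wassersteinInfty (μ ν : Measure ℝ) : ℝ≥0∞ :=
  ⨅ (γ : Measure (ℝ × ℝ)) (_ : IsCoupling γ μ ν),
    essSup (fun p => ENNReal.ofReal |p.1 - p.2|) γ

/-- `F⁻¹(1)`, the right endpoint of the support of `μ` (its maximum). -/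
noncomputable def supportSup (μ : Measure ℝ) : ℝ :=
  sInf {x : ℝ | μ (Set.Iic x) = 1}

/-- The class `F_β`: probability distributions with
`1 − F(F⁻¹(1) − t) ∈ [c₁ tᵝ, c₂ tᵝ]` for all sufficiently small `t ≥ 0`. -/
def BetaRegular (c₁ c₂ β : ℝ) (μ : Measure ℝ) : Prop :=
  IsProbabilityMeasure μ ∧
  ∃ t₀ > 0, ∀ t : ℝ, 0 ≤ t → t ≤ t₀ →
    c₁ * t ^ β ≤ 1 - (μ (Set.Iic (supportSup μ - t))).toReal ∧
    1 - (μ (Set.Iic (supportSup μ - t))).toReal ≤ c₂ * t ^ β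

namespace S7

noncomputable def Pm : Measure ℝ := volume.restrict (Set.Ioc 0 1)

instance : IsProbabilityMeasure Pm :=
  ⟨by simp [Pm, Real.volume_Ioc]⟩

noncomputable def qf (c β r u : ℝ) : ℝ := -r - ((1 - u) / c) ^ β⁻¹

lemma qf_meas (c : ℝ) {β : ℝ} (hβ : 0 < β) (r : ℝ) : Measurable (qf c β r) := by
  have h : Measurable fun u : ℝ => ((1 - u) / c) ^ β⁻¹ :=
    (Real.continuous_rpow_const (by positivity)).measurable.comp
      ((measurable_const.sub measurable_id).div_const c)
  exact measurable_const.sub h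

lemma qf_nonpos {c β r : ℝ} (hc : 0 < c) {u : ℝ} (hu : u ≤ 1) : qf c β r u ≤ -r := by
  have : (0:ℝ) ≤ ((1 - u) / c) ^ β⁻¹ :=
    Real.rpow_nonneg (div_nonneg (by linarith) hc.le) _
  simp only [qf]; linarith

lemma qf_preimage {c β : ℝ} (hc : 0 < c) (hβ : 0 < β) {t : ℝ} (ht : 0 ≤ t)
    (h1 : c * t ^ β ≤ 1) (r : ℝ) :
    qf c β r ⁻¹' (Set.Iic (-r - t)) ∩ Set.Ioc 0 1 = Set.Ioc 0 (1 - c * t ^ β) := by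
  have hct : 0 ≤ c * t ^ β := mul_nonneg hc.le (Real.rpow_nonneg ht _)
  ext u
  simp only [Set.mem_inter_iff, Set.mem_preimage, Set.mem_Iic, Set.mem_Ioc, qf]
  constructor
  · rintro ⟨hle, hu0, hu1⟩
    refine ⟨hu0, ?_⟩
    have h1u : 0 ≤ (1 - u) / c := div_nonneg (by linarith) hc.le
    have ht' : t ≤ ((1 - u) / c) ^ β⁻¹ := by linarith
    have := Real.rpow_le_rpow ht ht' hβ.le
    rw [Real.rpow_inv_rpow h1u hβ.ne'] at this
    rw [le_div_iff₀ hc] at this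
    nlinarith
  · rintro ⟨hu0, hu1'⟩
    have hu1 : u ≤ 1 := by linarith
    refine ⟨?_, hu0, hu1⟩
    have h1u : 0 ≤ (1 - u) / c := div_nonneg (by linarith) hc.le
    have h2 : t ^ β ≤ (1 - u) / c := by
      rw [le_div_iff₀ hc]; nlinarith
    have := Real.rpow_le_rpow (Real.rpow_nonneg ht β) h2 (by positivity : (0:ℝ) ≤ β⁻¹)
    rw [Real.rpow_rpow_inv ht hβ.ne'] at this
    linarith

lemma qf_cdf {c β : ℝ} (hc : 0 < c) (hβ : 0 < β) {t : ℝ} (ht : 0 ≤ t)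
    (h1 : c * t ^ β ≤ 1) (r : ℝ) :
    (Pm.map (qf c β r)) (Set.Iic (-r - t)) = ENNReal.ofReal (1 - c * t ^ β) := by
  rw [Measure.map_apply (qf_meas c hβ r) measurableSet_Iic, Pm,
    Measure.restrict_apply (qf_meas c hβ r measurableSet_Iic),
    qf_preimage hc hβ ht h1 r, Real.volume_Ioc, sub_zero]

/-- Generic computation of `supportSup` from a local CDF formula. -/
lemma supportSup_eq {μ : Measure ℝ} [IsProbabilityMeasure μ] {M t₀ : ℝ} (ht₀ : 0 < t₀)
    (F : ℝ → ℝ) (hF : ∀ t, 0 ≤ t → t ≤ t₀ → μ (Set.Iic (M - t)) = ENNReal.ofReal (F t))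
    (hF0 : 1 ≤ F 0) (hFlt : ∀ t, 0 < t → t ≤ t₀ → F t < 1) : supportSup μ = M := by
  have hM : μ (Set.Iic M) = 1 := by
    have h := hF 0 le_rfl ht₀.le
    rw [sub_zero] at h
    refine le_antisymm prob_le_one ?_
    rw [h]
    exact le_trans (by exact_mod_cast (ENNReal.one_le_ofReal).mpr hF0) le_rfl
  have hlt : ∀ y : ℝ, y < M → μ (Set.Iic y) < 1 := by
    intro y hy
    set t : ℝ := min (M - y) t₀ with htdef
    have ht : 0 < t := lt_min (by linarith) ht₀
    have h1 : y ≤ M - t := by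
      have : t ≤ M - y := min_le_left _ _
      linarith
    calc μ (Set.Iic y) ≤ μ (Set.Iic (M - t)) := measure_mono (Set.Iic_subset_Iic.mpr h1)
      _ = ENNReal.ofReal (F t) := hF t ht.le (min_le_right _ _)
      _ < 1 := ENNReal.ofReal_lt_one.mpr (hFlt t ht (min_le_right _ _))
  apply le_antisymm
  · exact csInf_le ⟨M, fun y hy => not_lt.mp fun h => (hlt y h).ne hy⟩ hM
  · exact le_csInf ⟨M, hM⟩ fun y hy => not_lt.mp fun h => (hlt y h).ne hy

end S7

namespace S7

variable {c β : ℝ}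

noncomputable def ts (c β : ℝ) : ℝ := (1 / (2 * c)) ^ β⁻¹

lemma ts_pos (hc : 0 < c) (hβ : 0 < β) : 0 < ts c β :=
  Real.rpow_pos_of_pos (by positivity) _

lemma ts_spec (hc : 0 < c) (hβ : 0 < β) : c * (ts c β) ^ β = 1 / 2 := by
  rw [ts, Real.rpow_inv_rpow (by positivity) hβ.ne']
  field_simp

lemma tail_le (hc : 0 < c) (hβ : 0 < β) {t : ℝ} (ht : 0 ≤ t) (hts : t ≤ ts c β) :
    c * t ^ β ≤ 1 / 2 := by
  have h := Real.rpow_le_rpow ht hts hβ.le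
  have h2 := ts_spec hc hβ
  nlinarith [mul_le_mul_of_nonneg_left h hc.le]

lemma qf_prob (hβ : 0 < β) (r : ℝ) : IsProbabilityMeasure (Pm.map (qf c β r)) :=
  Measure.isProbabilityMeasure_map (qf_meas c hβ r).aemeasurable

lemma qf_supportSup (hc : 0 < c) (hβ : 0 < β) (r : ℝ) :
    supportSup (Pm.map (qf c β r)) = -r := by
  haveI := qf_prob (c := c) hβ r
  apply supportSup_eq (ts_pos hc hβ) (fun t => 1 - c * t ^ β)
  · intro t ht hts
    exact qf_cdf hc hβ ht (le_trans (tail_le hc hβ ht hts) (by norm_num)) r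
  · simp [Real.zero_rpow hβ.ne']
  · intro t ht _
    nlinarith [mul_pos hc (Real.rpow_pos_of_pos ht β)]

lemma qf_betaRegular {c₁ c₂ : ℝ} (hc₁ : 0 < c₁) (hc₁₂ : c₁ ≤ c₂) (hβ : 0 < β) (r : ℝ) :
    BetaRegular c₁ c₂ β (Pm.map (qf c₁ β r)) := by
  refine ⟨qf_prob hβ r, ts c₁ β, ts_pos hc₁ hβ, fun t ht hts => ?_⟩
  rw [qf_supportSup hc₁ hβ r]
  have hle := tail_le hc₁ hβ ht hts
  rw [show -r - t = -r - t from rfl]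
  rw [qf_cdf hc₁ hβ ht (le_trans hle (by norm_num)) r,
    ENNReal.toReal_ofReal (by nlinarith)]
  have h0 : 0 ≤ t ^ β := Real.rpow_nonneg ht β
  constructor <;> nlinarith

end S7

set_option maxHeartbeats 2000000 in
/-- For fixed `0 < c₁ < c₂` and `β > 0` there is a constant `C > 0` such
that for every `ε ∈ (0,1/2)` there are pairs `F₁, F₂ ∈ F_β` with
`|max(F₁) − max(F₂)| ≥ 2ε` and (i) `W₂(F₁,F₂) ≤ C ε^{β/2+1}`; pairs with (ii)
`W_∞(F₁,F₂) ≤ C ε`; and pairs with (iii) `D_KL(F₁‖F₂) ≤ C ε^β`. -/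
theorem stmt7
    (c₁ c₂ β : ℝ) (hc₁ : 0 < c₁) (hc₁₂ : c₁ < c₂) (hβ : 0 < β) :
    ∃ C : ℝ, 0 < C ∧ ∀ ε : ℝ, 0 < ε → ε < 1 / 2 →
      (∃ μ₁ μ₂ : Measure ℝ, BetaRegular c₁ c₂ β μ₁ ∧ BetaRegular c₁ c₂ β μ₂ ∧
        2 * ε ≤ |supportSup μ₁ - supportSup μ₂| ∧
        wasserstein2Sq μ₁ μ₂ ≤ ENNReal.ofReal ((C * ε ^ (β / 2 + 1)) ^ 2)) ∧
      (∃ μ₁ μ₂ : Measure ℝ, BetaRegular c₁ c₂ β μ₁ ∧ BetaRegular c₁ c₂ β μ₂ ∧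
        2 * ε ≤ |supportSup μ₁ - supportSup μ₂| ∧
        wassersteinInfty μ₁ μ₂ ≤ ENNReal.ofReal (C * ε)) ∧
      (∃ μ₁ μ₂ : Measure ℝ, BetaRegular c₁ c₂ β μ₁ ∧ BetaRegular c₁ c₂ β μ₂ ∧
        2 * ε ≤ |supportSup μ₁ - supportSup μ₂| ∧
        klDiv μ₁ μ₂ ≤ ENNReal.ofReal (C * ε ^ β)) := by
  classical
  have hc₂ : 0 < c₂ := hc₁.trans hc₁₂
  set ρ : ℝ := (c₂ / c₁) ^ β⁻¹ with hρdef
  have hρ1 : 1 < ρ := by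
    have h1 : 1 < c₂ / c₁ := (one_lt_div hc₁).mpr hc₁₂
    calc (1:ℝ) = 1 ^ β⁻¹ := (Real.one_rpow _).symm
      _ < (c₂ / c₁) ^ β⁻¹ := Real.rpow_lt_rpow (by norm_num) h1 (by positivity)
  have hρβ : ρ ^ β = c₂ / c₁ := Real.rpow_inv_rpow (by positivity) hβ.ne'
  set Kc : ℝ := 2 * ρ / (ρ - 1) with hKcdef
  have hKcpos : 0 < Kc := div_pos (by linarith) (by linarith)
  set C : ℝ := max (max 2 (Real.sqrt (4 * c₁ * Kc ^ β))) (2 * c₁ * (2:ℝ) ^ β) with hCdef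
  have hC2 : (2:ℝ) ≤ C := le_trans (le_max_left _ _) (le_max_left _ _)
  have hCsq : Real.sqrt (4 * c₁ * Kc ^ β) ≤ C := le_trans (le_max_right _ _) (le_max_left _ _)
  have hCkl : 2 * c₁ * (2:ℝ) ^ β ≤ C := le_max_right _ _
  have hCpos : (0:ℝ) < C := lt_of_lt_of_le two_pos hC2
  refine ⟨C, hCpos, fun ε hε hε2 => ⟨?_, ?_, ?_⟩⟩
  · -- part (i): W₂
    set a : ℝ := Kc * ε with hadef
    have ha : 0 < a := mul_pos hKcpos hε
    have hρne : ρ - 1 ≠ 0 := by linarith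
    have hs2 : a - 2*ε = 2*ε/(ρ-1) := by
      rw [hadef, hKcdef]; field_simp; ring
    have hs2pos : 0 < a - 2*ε := by
      rw [hs2]; exact div_pos (by linarith) (by linarith)
    have hρa : ρ * (a - 2*ε) = a := by
      rw [hs2, hadef, hKcdef]; field_simp
    set gm : ℝ → ℝ := fun x => if x ≤ -a then x else (a - 2*ε)/a * x - 2*ε with hgmdef
    have hgm_meas : Measurable gm :=
      Measurable.ite (measurableSet_le measurable_id measurable_const) measurable_id
        ((measurable_id.const_mul _).sub measurable_const)
    have hkey : ∀ x s : ℝ, ((a-2*ε)/a * x - 2*ε ≤ -(2*ε) - s ↔ x ≤ -(ρ*s)) := by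
      intro x s
      rw [show ((a-2*ε)/a * x - 2*ε ≤ -(2*ε) - s) ↔ ((a-2*ε)/a * x ≤ -s) from
        ⟨fun h => by linarith, fun h => by linarith⟩]
      rw [div_mul_eq_mul_div, div_le_iff₀ ha,
        show -s*a = (a-2*ε) * (-(ρ*s)) by linear_combination s * hρa]
      exact mul_le_mul_iff_right₀ hs2pos
    have hgm_le_iff : ∀ x : ℝ, x ≤ 0 → ∀ s : ℝ, 0 ≤ s → s ≤ a - 2*ε →
        (gm x ≤ -(2*ε) - s ↔ x ≤ -(ρ*s)) := by
      intro x hx s hs hsle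
      by_cases hxa : x ≤ -a
      · rw [hgmdef]
        simp only [if_pos hxa]
        have h1 : ρ*s ≤ a := by nlinarith [hρa]
        exact ⟨fun _ => by linarith, fun _ => by linarith⟩
      · rw [hgmdef]
        simp only [if_neg hxa]
        exact hkey x s
    set qb : ℝ → ℝ := S7.qf c₁ β 0 with hqbdef
    have hqbm : Measurable qb := S7.qf_meas c₁ hβ 0
    have hqb_nonpos : ∀ u : ℝ, u ≤ 1 → qb u ≤ 0 := by
      intro u hu
      have := S7.qf_nonpos (β := β) (r := 0) hc₁ hu
      rw [neg_zero] at this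
      exact this
    set μw : Measure ℝ := S7.Pm.map (fun u => gm (qb u)) with hμwdef
    have hμwm : Measurable fun u => gm (qb u) := hgm_meas.comp hqbm
    haveI hμwprob : IsProbabilityMeasure μw := Measure.isProbabilityMeasure_map hμwm.aemeasurable
    set t0i : ℝ := min (a - 2*ε) (S7.ts c₁ β / ρ) with ht0idef
    have ht0i : 0 < t0i := lt_min hs2pos (div_pos (S7.ts_pos hc₁ hβ) (by linarith))
    have hρs_ts : ∀ s : ℝ, 0 ≤ s → s ≤ t0i → c₁ * (ρ*s) ^ β ≤ 1 := by
      intro s hs hsle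
      have h1 : s ≤ S7.ts c₁ β / ρ := le_trans hsle (min_le_right _ _)
      have h2 : ρ * s ≤ S7.ts c₁ β := by
        have := (le_div_iff₀ (by linarith : (0:ℝ) < ρ)).mp h1
        linarith
      exact le_trans (S7.tail_le hc₁ hβ (by positivity) h2) (by norm_num)
    have hμwcdf : ∀ s : ℝ, 0 ≤ s → s ≤ t0i →
        μw (Set.Iic (-(2*ε) - s)) = ENNReal.ofReal (1 - c₁ * (ρ*s) ^ β) := by
      intro s hs hsle
      rw [hμwdef, Measure.map_apply hμwm measurableSet_Iic, S7.Pm,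
        Measure.restrict_apply (hμwm measurableSet_Iic)]
      have hset : (fun u => gm (qb u)) ⁻¹' (Set.Iic (-(2*ε) - s)) ∩ Set.Ioc 0 1
          = S7.qf c₁ β 0 ⁻¹' (Set.Iic (-0 - ρ*s)) ∩ Set.Ioc 0 1 := by
        ext u
        simp only [Set.mem_inter_iff, Set.mem_preimage, Set.mem_Iic, Set.mem_Ioc]
        constructor
        · rintro ⟨h1, h2⟩
          refine ⟨?_, h2⟩
          have := (hgm_le_iff (qb u) (hqb_nonpos u h2.2) s hs
            (le_trans hsle (min_le_left _ _))).mp h1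
          rw [hqbdef] at this
          linarith [this]
        · rintro ⟨h1, h2⟩
          refine ⟨?_, h2⟩
          refine (hgm_le_iff (qb u) (hqb_nonpos u h2.2) s hs
            (le_trans hsle (min_le_left _ _))).mpr ?_
          rw [hqbdef]
          linarith [h1]
      rw [hset, S7.qf_preimage hc₁ hβ (by positivity : (0:ℝ) ≤ ρ*s) (hρs_ts s hs hsle) 0,
        Real.volume_Ioc, sub_zero]
    have hμwsup : supportSup μw = -(2*ε) := by
      apply S7.supportSup_eq ht0i (fun s => 1 - c₁ * (ρ*s) ^ β) hμwcdf
      · simp [Real.zero_rpow hβ.ne']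
      · intro s hs _
        nlinarith [mul_pos hc₁ (Real.rpow_pos_of_pos (by positivity : (0:ℝ) < ρ*s) β)]
    have hμwreg : BetaRegular c₁ c₂ β μw := by
      refine ⟨hμwprob, t0i, ht0i, fun s hs hsle => ?_⟩
      have hρsβ : c₁ * (ρ*s) ^ β = c₂ * s ^ β := by
        rw [Real.mul_rpow (by positivity) hs, hρβ]
        field_simp
      rw [hμwsup, hμwcdf s hs hsle, ENNReal.toReal_ofReal (by nlinarith [hρs_ts s hs hsle])]
      have h0 : 0 ≤ s ^ β := Real.rpow_nonneg hs β
      rw [show 1 - (1 - c₁ * (ρ*s) ^ β) = c₁ * (ρ*s) ^ β by ring, hρsβ]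
      constructor <;> nlinarith
    refine ⟨μw, S7.Pm.map (S7.qf c₁ β 0), hμwreg, S7.qf_betaRegular hc₁ hc₁₂.le hβ 0, ?_, ?_⟩
    · rw [hμwsup, S7.qf_supportSup hc₁ hβ, neg_zero, sub_zero, abs_of_nonpos (by linarith)]
      linarith
    · -- W₂ bound
      set f : ℝ → ℝ × ℝ := fun u => (gm (qb u), qb u) with hfdef
      have hfm : Measurable f := hμwm.prodMk hqbm
      have hcpl : IsCoupling (S7.Pm.map f) μw (S7.Pm.map (S7.qf c₁ β 0)) := by
        constructor
        · rw [Measure.map_map measurable_fst hfm]; rfl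
        · rw [Measure.map_map measurable_snd hfm]; rfl
      refine le_trans (iInf_le_of_le (S7.Pm.map f) (iInf_le_of_le hcpl le_rfl)) ?_
      have hintm : Measurable fun p : ℝ × ℝ => ENNReal.ofReal ((p.1 - p.2) ^ 2) :=
        ((measurable_fst.sub measurable_snd).pow_const 2).ennreal_ofReal
      rw [lintegral_map hintm hfm]
      have hbound : ∫⁻ u, ENNReal.ofReal ((gm (qb u) - qb u) ^ 2) ∂S7.Pm
          ≤ ∫⁻ u, (Set.Ioi (1 - c₁ * a ^ β)).indicator
              (fun _ => ENNReal.ofReal ((2*ε) ^ 2)) u ∂S7.Pm := by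
        apply lintegral_mono_ae
        rw [S7.Pm]
        filter_upwards [ae_restrict_mem measurableSet_Ioc] with u hu
        by_cases hcase : 1 - c₁ * a ^ β < u
        · rw [Set.indicator_of_mem (show u ∈ Set.Ioi (1 - c₁ * a ^ β) from hcase)]
          apply ENNReal.ofReal_le_ofReal
          have hx : qb u ≤ 0 := hqb_nonpos u hu.2
          by_cases hxa : qb u ≤ -a
          · rw [hgmdef]; simp only [if_pos hxa]
            nlinarith
          · rw [hgmdef]; simp only [if_neg hxa]
            push_neg at hxa
            set x : ℝ := qb u
            have e1 : (a-2*ε)/a * x - 2*ε - x = -(2*ε/a)*x - 2*ε := by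
              field_simp; ring
            have hq : 0 < 2*ε/a := div_pos (by linarith) ha
            have b1 : 0 ≤ -(2*ε/a)*x := by nlinarith
            have b2 : -(2*ε/a)*x ≤ 2*ε := by
              have h2a : 2*ε/a*a = 2*ε := div_mul_cancel₀ _ ha.ne'
              nlinarith
            nlinarith [e1]
        · push_neg at hcase
          have hxa : qb u ≤ -a := by
            have h1 : c₁ * a ^ β ≤ 1 - u := by linarith
            have h2 : a ^ β ≤ (1-u)/c₁ := (le_div_iff₀ hc₁).mpr (by linarith [h1])
            have h3 := Real.rpow_le_rpow (Real.rpow_nonneg ha.le β) h2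
              (by positivity : (0:ℝ) ≤ β⁻¹)
            rw [Real.rpow_rpow_inv ha.le hβ.ne'] at h3
            have : qb u = -0 - ((1-u)/c₁) ^ β⁻¹ := rfl
            rw [this]
            linarith
          rw [hgmdef]
          simp only [if_pos hxa, sub_self]
          simp
      refine le_trans hbound ?_
      rw [lintegral_indicator_const measurableSet_Ioi]
      have hPm : S7.Pm (Set.Ioi (1 - c₁ * a ^ β)) ≤ ENNReal.ofReal (c₁ * a ^ β) := by
        rw [S7.Pm, Measure.restrict_apply measurableSet_Ioi]
        refine le_trans (measure_mono (?_ : Set.Ioi (1 - c₁ * a ^ β) ∩ Set.Ioc 0 1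
          ⊆ Set.Ioc (1 - c₁ * a ^ β) 1)) ?_
        · intro u hu
          exact ⟨hu.1, hu.2.2⟩
        · rw [Real.volume_Ioc]
          apply ENNReal.ofReal_le_ofReal
          linarith
      refine le_trans (mul_le_mul_right hPm _) ?_
      rw [← ENNReal.ofReal_mul (by positivity)]
      apply ENNReal.ofReal_le_ofReal
      -- real inequality
      have haβ : a ^ β = Kc ^ β * ε ^ β := by
        rw [hadef, Real.mul_rpow hKcpos.le hε.le]
      have hC2' : 4 * c₁ * Kc ^ β ≤ C ^ 2 := by
        have hnn : (0:ℝ) ≤ 4 * c₁ * Kc ^ β := by positivity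
        calc 4 * c₁ * Kc ^ β = Real.sqrt (4 * c₁ * Kc ^ β) ^ 2 := (Real.sq_sqrt hnn).symm
          _ ≤ C ^ 2 := pow_le_pow_left₀ (Real.sqrt_nonneg _) hCsq 2
      have hεp : (ε ^ (β/2 + 1)) ^ 2 = ε ^ β * ε ^ 2 := by
        rw [sq (ε ^ (β/2 + 1)), ← Real.rpow_add hε,
          show β/2 + 1 + (β/2 + 1) = β + 2 by ring, Real.rpow_add hε]
        congr 1
        rw [← Real.rpow_natCast ε 2]
        norm_num
      have hεβ : (0:ℝ) ≤ ε ^ β := Real.rpow_nonneg hε.le β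
      calc (2*ε) ^ 2 * (c₁ * a ^ β) = (4 * c₁ * Kc ^ β) * (ε ^ β * ε ^ 2) := by
            rw [haβ]; ring
        _ ≤ C ^ 2 * (ε ^ β * ε ^ 2) := by nlinarith
        _ = (C * ε ^ (β/2 + 1)) ^ 2 := by rw [mul_pow, hεp]
  · -- part (ii): W∞
    refine ⟨S7.Pm.map (S7.qf c₁ β 0), S7.Pm.map (S7.qf c₁ β (2*ε)),
      S7.qf_betaRegular hc₁ hc₁₂.le hβ 0, S7.qf_betaRegular hc₁ hc₁₂.le hβ (2*ε), ?_, ?_⟩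
    · rw [S7.qf_supportSup hc₁ hβ, S7.qf_supportSup hc₁ hβ]
      rw [abs_of_nonneg (by linarith)]
      linarith
    · set f : ℝ → ℝ × ℝ := fun u => (S7.qf c₁ β 0 u, S7.qf c₁ β (2*ε) u) with hf
      have hfm : Measurable f := (S7.qf_meas c₁ hβ 0).prodMk (S7.qf_meas c₁ hβ (2*ε))
      have hcpl : IsCoupling (S7.Pm.map f)
          (S7.Pm.map (S7.qf c₁ β 0)) (S7.Pm.map (S7.qf c₁ β (2*ε))) := by
        constructor
        · rw [Measure.map_map measurable_fst hfm]; rfl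
        · rw [Measure.map_map measurable_snd hfm]; rfl
      refine le_trans (iInf_le_of_le (S7.Pm.map f) (iInf_le_of_le hcpl le_rfl)) ?_
      have hbd : essSup (fun p : ℝ × ℝ => ENNReal.ofReal |p.1 - p.2|) (S7.Pm.map f)
          ≤ ENNReal.ofReal (2*ε) := by
        refine essSup_le_of_ae_le _ ?_
        have hms : MeasurableSet {p : ℝ × ℝ | ENNReal.ofReal |p.1 - p.2| ≤ ENNReal.ofReal (2*ε)} :=
          measurableSet_le ((measurable_fst.sub measurable_snd).abs).ennreal_ofReal
            measurable_const
        rw [Filter.EventuallyLE, ae_map_iff hfm.aemeasurable hms]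
        refine Filter.Eventually.of_forall fun u => ?_
        have : S7.qf c₁ β 0 u - S7.qf c₁ β (2*ε) u = 2*ε := by
          simp only [S7.qf]; ring
        simp only [hf, Set.mem_setOf_eq, this, abs_of_nonneg (by linarith : (0:ℝ) ≤ 2*ε)]
        exact le_rfl
      refine le_trans hbd (ENNReal.ofReal_le_ofReal ?_)
      nlinarith
  · -- part (iii): KL
    set t1 : ℝ := min (2*ε) (S7.ts c₁ β) with ht1def
    have ht1 : 0 < t1 := lt_min (by linarith) (S7.ts_pos hc₁ hβ)
    have ht1β : 0 < t1 ^ β := Real.rpow_pos_of_pos ht1 β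
    set m : ℝ := c₁ * t1 ^ β with hmdef
    have hm : 0 < m := mul_pos hc₁ ht1β
    have hm2 : m ≤ 1/2 := S7.tail_le hc₁ hβ ht1.le (min_le_right _ _)
    set ca : ℝ := c₁ / m with hcadef
    have hca : 0 < ca := div_pos hc₁ hm
    have hcat1 : ca * t1 ^ β = 1 := by
      rw [hcadef, hmdef]; field_simp
    have hcale : ∀ t : ℝ, 0 ≤ t → t ≤ t1 → ca * t ^ β ≤ 1 := by
      intro t ht htle
      have := Real.rpow_le_rpow ht htle hβ.le
      nlinarith
    set νt : Measure ℝ := S7.Pm.map (S7.qf ca β 0) with hνtdef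
    set μ1 : Measure ℝ := S7.Pm.map (S7.qf c₁ β (2*ε)) with hμ1def
    set μ2 : Measure ℝ := ENNReal.ofReal m • νt + ENNReal.ofReal (1-m) • μ1 with hμ2def
    haveI hμ1prob : IsProbabilityMeasure μ1 := S7.qf_prob hβ (2*ε)
    haveI hνtprob : IsProbabilityMeasure νt := S7.qf_prob hβ 0
    have hμ1full : ∀ x : ℝ, -(2*ε) ≤ x → μ1 (Set.Iic x) = 1 := by
      intro x hx
      have h0 : μ1 (Set.Iic (-(2*ε) - 0)) = ENNReal.ofReal (1 - c₁ * 0 ^ β) :=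
        S7.qf_cdf hc₁ hβ le_rfl (by simp [Real.zero_rpow hβ.ne']) (2*ε)
      rw [sub_zero] at h0
      simp only [Real.zero_rpow hβ.ne', mul_zero, sub_zero, ENNReal.ofReal_one] at h0
      refine le_antisymm prob_le_one ?_
      rw [← h0]
      exact measure_mono (Set.Iic_subset_Iic.mpr hx)
    have hνtcdf : ∀ t : ℝ, 0 ≤ t → t ≤ t1 → νt (Set.Iic (-t)) = ENNReal.ofReal (1 - ca * t ^ β) := by
      intro t ht htle
      have h := S7.qf_cdf hca hβ ht (hcale t ht htle) 0
      rw [neg_zero, zero_sub] at h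
      exact h
    haveI hμ2prob : IsProbabilityMeasure μ2 := by
      constructor
      rw [hμ2def]
      simp only [Measure.add_apply, Measure.smul_apply, smul_eq_mul, measure_univ, mul_one]
      rw [← ENNReal.ofReal_add hm.le (by linarith)]
      norm_num
    have hμ2cdf : ∀ t : ℝ, 0 ≤ t → t ≤ t1 → μ2 (Set.Iic (0 - t)) = ENNReal.ofReal (1 - c₁ * t ^ β) := by
      intro t ht htle
      have h2ε : -t ≥ -(2*ε) := by
        have : t ≤ 2*ε := le_trans htle (min_le_left _ _)
        linarith
      rw [hμ2def, zero_sub]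
      simp only [Measure.add_apply, Measure.smul_apply, smul_eq_mul]
      rw [hνtcdf t ht htle, hμ1full _ h2ε, mul_one,
        ← ENNReal.ofReal_mul hm.le, ← ENNReal.ofReal_add (by nlinarith [hcale t ht htle]) (by linarith)]
      congr 1
      have hmca : m * ca = c₁ := by rw [hcadef]; field_simp
      linear_combination (-(t ^ β)) * hmca
    have hμ2sup : supportSup μ2 = 0 := by
      apply S7.supportSup_eq ht1 (fun t => 1 - c₁ * t ^ β) hμ2cdf
      · simp [Real.zero_rpow hβ.ne']
      · intro t ht _
        nlinarith [mul_pos hc₁ (Real.rpow_pos_of_pos ht β)]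
    have hctle : ∀ t : ℝ, 0 ≤ t → t ≤ t1 → c₁ * t ^ β ≤ m := by
      intro t ht htle
      have := Real.rpow_le_rpow ht htle hβ.le
      rw [hmdef]
      nlinarith
    have hμ2reg : BetaRegular c₁ c₂ β μ2 := by
      refine ⟨hμ2prob, t1, ht1, fun t ht htle => ?_⟩
      rw [hμ2sup, hμ2cdf t ht htle,
        ENNReal.toReal_ofReal (by nlinarith [hctle t ht htle])]
      have h0 : 0 ≤ t ^ β := Real.rpow_nonneg ht β
      constructor <;> nlinarith
    have hμ1reg : BetaRegular c₁ c₂ β μ1 := S7.qf_betaRegular hc₁ hc₁₂.le hβ (2*ε)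
    have hμ1sup : supportSup μ1 = -(2*ε) := S7.qf_supportSup hc₁ hβ (2*ε)
    -- the restriction identity
    set s : Set ℝ := Set.Iic (-(2*ε)) with hsdef
    have hνt0 : νt s = 0 := by
      have h1 : νt (Set.Iic (-t1)) = 0 := by
        rw [hνtcdf t1 ht1.le le_rfl, hcat1]
        simp
      refine le_antisymm ?_ (by simp)
      rw [← h1]
      refine measure_mono (Set.Iic_subset_Iic.mpr ?_)
      have : t1 ≤ 2*ε := min_le_left _ _
      linarith
    have hμ1s : μ1 s = 1 := hμ1full _ le_rfl
    have hμ1sc : μ1 sᶜ = 0 := by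
      have := measure_compl (μ := μ1) (s := s) measurableSet_Iic (measure_ne_top _ _)
      rw [measure_univ, hμ1s] at this
      simpa using this
    have hμ1ae : ∀ᵐ x ∂μ1, x ∈ s := by
      rw [MeasureTheory.ae_iff]
      exact hμ1sc
    have hrs : μ2.restrict s = ENNReal.ofReal (1-m) • μ1 := by
      rw [hμ2def, Measure.restrict_add, Measure.restrict_smul, Measure.restrict_smul,
        Measure.restrict_eq_zero.mpr hνt0, smul_zero, zero_add,
        Measure.restrict_eq_self_of_ae_mem hμ1ae]
    have hne0 : ENNReal.ofReal (1-m) ≠ 0 := (ENNReal.ofReal_pos.mpr (by linarith)).ne'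
    have hμ1eq : μ1 = (ENNReal.ofReal (1-m))⁻¹ • μ2.restrict s := by
      rw [hrs, smul_smul, ENNReal.inv_mul_cancel hne0 ENNReal.ofReal_ne_top, one_smul]
    have hac : μ1 ≪ μ2 := by
      rw [hμ1eq]
      exact Measure.smul_absolutelyContinuous.trans
        Measure.restrict_le_self.absolutelyContinuous
    have hrn1 : μ1.rnDeriv μ2 =ᵐ[μ2] (ENNReal.ofReal (1-m))⁻¹ • (μ2.restrict s).rnDeriv μ2 := by
      rw [hμ1eq]
      exact Measure.rnDeriv_smul_left_of_ne_top (μ2.restrict s) μ2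
        (ENNReal.inv_ne_top.mpr hne0)
    have hrn2 : (μ2.restrict s).rnDeriv μ2 =ᵐ[μ2] s.indicator 1 :=
      Measure.rnDeriv_restrict_self μ2 measurableSet_Iic
    have hrn : μ1.rnDeriv μ2 =ᵐ[μ1] fun _ => (ENNReal.ofReal (1-m))⁻¹ := by
      filter_upwards [hac.ae_le hrn1, hac.ae_le hrn2, hμ1ae] with x h1 h2 hx
      rw [h1, Pi.smul_apply, h2, Set.indicator_of_mem hx, Pi.one_apply, smul_eq_mul, mul_one]
    have hllr : llr μ1 μ2 =ᵐ[μ1] fun _ => Real.log ((1-m)⁻¹) := by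
      filter_upwards [hrn] with x hx
      have hd : llr μ1 μ2 x = Real.log ((μ1.rnDeriv μ2 x).toReal) := rfl
      rw [hd, hx, ENNReal.toReal_inv, ENNReal.toReal_ofReal (by linarith)]
    have hint : Integrable (llr μ1 μ2) μ1 :=
      (integrable_congr hllr).mpr (integrable_const _)
    have hKL : klDiv μ1 μ2 = ENNReal.ofReal (Real.log ((1-m)⁻¹)) := by
      rw [klDiv, if_pos ⟨hac, hint⟩, integral_congr_ae hllr, integral_const, probReal_univ,
        one_smul]
    refine ⟨μ1, μ2, hμ1reg, hμ2reg, ?_, ?_⟩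
    · rw [hμ1sup, hμ2sup, abs_of_nonpos (by linarith)]
      linarith
    · rw [hKL]
      apply ENNReal.ofReal_le_ofReal
      have hlog : Real.log ((1-m)⁻¹) ≤ (1-m)⁻¹ - 1 :=
        Real.log_le_sub_one_of_pos (inv_pos.mpr (by linarith))
      have h1m : (1:ℝ) - m ≠ 0 := by linarith
      have heq : (1-m)⁻¹ - 1 = m / (1-m) := by
        rw [eq_div_iff h1m, sub_mul, inv_mul_cancel₀ h1m]; ring
      have hmm : m / (1-m) ≤ 2*m := by
        rw [div_le_iff₀ (by linarith)]
        nlinarith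
      have ht1e : t1 ^ β ≤ (2*ε) ^ β :=
        Real.rpow_le_rpow ht1.le (min_le_left _ _) hβ.le
      have h2εβ : (2*ε) ^ β = 2 ^ β * ε ^ β := Real.mul_rpow (by norm_num) hε.le
      have hεβ : (0:ℝ) ≤ ε ^ β := Real.rpow_nonneg hε.le β
      have h2β : (0:ℝ) < (2:ℝ) ^ β := Real.rpow_pos_of_pos two_pos β
      have : 2*m ≤ C * ε ^ β := by
        have h1 : 2*m ≤ 2*c₁*(2 ^ β * ε ^ β) := by
          rw [hmdef]
          nlinarith
        have h2 : 2*c₁*(2 ^ β * ε ^ β) ≤ C * ε ^ β := by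
          have := mul_le_mul_of_nonneg_right hCkl hεβ
          nlinarith
        linarith
      linarith
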